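/- Let Σ_5 be the rank-6 lattice with basis A, E1, ..., E5 and Gram matrix [[0,1,0,0,0,0],[1,-2,0,0,0,0],[0,0,-2,0,0,0],[0,0,0,-2,0,0],[0,0,0,0,-2,0],[0,0,0,0,0,-2]]. Then the map σ sending B ↦ 12A + 6E1 - 4E2 - 3E3 - 2E4 - E5, C1 ↦ A - E2, C2 ↦ -E1, C3 ↦ A - E3 defines a primitive embedding of the rank-4 lattice Λ with Gram matrix [[12,-2,0,0],[-2,-2,-1,0],[0,-1,-2,-1],[0,0,-1,-2]] (in basis B, C1, C2, C3) into Σ_5. -/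

import Mathlib

/-- The bilinear form of the rank-6 lattice `Σ₅` with Gram matrix
`[[0,1],[1,-2]] ⊕ ⟨-2⟩⁴` in the basis `A, E1, ..., E5`. -/
def form6 (u v : Fin 6 → ℤ) : ℤ :=
  u 0 * v 1 + u 1 * v 0 -
    2 * (u 1 * v 1 + u 2 * v 2 + u 3 * v 3 + u 4 * v 4 + u 5 * v 5)

/-- The Gram matrix of Nikulin's rank-4 lattice in the basis `B, C1, C2, C3`. -/
def gram17 : Matrix (Fin 4) (Fin 4) ℤ :=
  !![12, -2, 0, 0; -2, -2, -1, 0; 0, -1, -2, -1; 0, 0, -1, -2]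

/-- The map `B ↦ 12A + 6E1 - 4E2 - 3E3 - 2E4 - E5`, `C1 ↦ A - E2`, `C2 ↦ -E1`,
`C3 ↦ A - E3`. -/
def sigma17 (x : Fin 4 → ℤ) : Fin 6 → ℤ :=
  x 0 • ![12, 6, -4, -3, -2, -1] + x 1 • ![1, 0, -1, 0, 0, 0] +
    x 2 • ![0, -1, 0, 0, 0, 0] + x 3 • ![1, 0, 0, -1, 0, 0]

@[simp] lemma cons_val_five {α : Type*} (a b c d e f : α) :
    (![a, b, c, d, e, f] : Fin 6 → α) 5 = f := rfl

lemma sigma17_eq (x : Fin 4 → ℤ) :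
    sigma17 x = ![12 * x 0 + x 1 + x 3, 6 * x 0 - x 2, -4 * x 0 - x 1,
      -3 * x 0 - x 3, -2 * x 0, -x 0] := by
  funext i
  fin_cases i <;> simp [sigma17] <;> ring

/-- `sigma17` is a primitive embedding of the rank-4 lattice with Gram matrix
`gram17` into `Σ₅`. -/
theorem stmt_17 :
    (∀ x y : Fin 4 → ℤ,
      form6 (sigma17 x) (sigma17 y) = dotProduct x (gram17.mulVec y)) ∧
    Function.Injective sigma17 ∧
    (∀ (y : Fin 6 → ℤ) (n : ℤ), n ≠ 0 →
      n • y ∈ Set.range sigma17 → y ∈ Set.range sigma17) := by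
  refine ⟨?_, ?_, ?_⟩
  · intro x y
    simp [form6, sigma17_eq, gram17, dotProduct, Matrix.mulVec, Fin.sum_univ_six,
      Fin.sum_univ_four, Matrix.vecHead, Matrix.vecTail]
    ring
  · intro x y h
    rw [sigma17_eq, sigma17_eq] at h
    have h2 := congrFun h 2
    have h1 := congrFun h 1
    have h3 := congrFun h 3
    have h5 := congrFun h 5
    simp only [Matrix.cons_val_one, Matrix.head_cons, Matrix.cons_val_two,
      Matrix.tail_cons, Matrix.cons_val_three, cons_val_five] at h1 h2 h3 h5
    norm_num at h1 h2 h3 h5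
    funext i
    fin_cases i <;> simp <;> omega
  · rintro y n hn ⟨x, hx⟩
    refine ⟨![-y 5, 4 * y 5 - y 2, -6 * y 5 - y 1, 3 * y 5 - y 3], ?_⟩
    rw [sigma17_eq] at hx ⊢
    have k0 := congrFun hx 0
    have k1 := congrFun hx 1
    have k2 := congrFun hx 2
    have k3 := congrFun hx 3
    have k4 := congrFun hx 4
    have k5 := congrFun hx 5
    simp only [Pi.smul_apply, smul_eq_mul, Matrix.cons_val_zero, Matrix.cons_val_one,
      Matrix.head_cons, Matrix.cons_val_two, Matrix.tail_cons, Matrix.cons_val_three, Matrix.cons_val_four, cons_val_five] at k0 k1 k2 k3 k4 k5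
    norm_num at k0 k1 k2 k3 k4 k5
    have e0 : y 0 = -5 * y 5 - y 2 - y 3 :=
      mul_left_cancel₀ hn (by linear_combination -k0 - k2 - k3 - 5 * k5)
    have e4 : y 4 = 2 * y 5 :=
      mul_left_cancel₀ hn (by linear_combination 2 * k5 - k4)
    clear hx k0 k1 k2 k3 k4 k5
    funext i
    fin_cases i <;> simp <;> omega
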